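/- arXiv:1902.09570 — 5 statements merged into one kernel-verified Lean document; each statement's English description precedes it below -/
import Mathlib

section
/- (Finitely supported Cantor theorem) Let X be a finitely supported subset of an invariant set under finitary permutations of A. Then the map x ↦ {x} is a finitely supported injection from X into ℘_fs(X), but there is no finitely supported surjection from X onto ℘_fs(X); hence |X| is strictly smaller than |℘_fs(X)| both with respect to finitely supported injections and with respect to finitely supported surjections. -/
open Pointwise

/-- The group of finitary permutations of the set `A` of atoms: bijections of `A`
whose set of non-fixed points is finite. -/
def FinPerm (A : Type*) : Subgroup (Equiv.Perm A) where
  carrier := {π : Equiv.Perm A | {a : A | π a ≠ a}.Finite}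
  one_mem' := by simp
  mul_mem' := by
    intro π σ hπ hσ
    refine Set.Finite.subset (Set.Finite.union hπ hσ) ?_
    intro a ha
    simp only [Set.mem_setOf_eq, Set.mem_union] at *
    by_contra h
    push_neg at h
    obtain ⟨h1, h2⟩ := h
    exact ha (by rw [Equiv.Perm.mul_apply, h2, h1])
  inv_mem' := by
    intro π hπ
    refine Set.Finite.subset hπ ?_
    intro a ha
    simp only [Set.mem_setOf_eq] at *
    intro h
    exact ha (π.injective (by simp [h]))

/-- An element `x` is finitely supported if some finite set of atoms supports it. -/
def FinSupp (A : Type*) {X : Type*} [SMul (FinPerm A) X] (x : X) : Prop :=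
  ∃ S : Finset A, MulAction.Supports (FinPerm A) (S : Set A) x

/-- The least support of an element: the intersection of all finite sets of atoms
supporting it. -/
def supp (A : Type*) {X : Type*} [SMul (FinPerm A) X] (x : X) : Set A :=
  ⋂₀ {S : Set A | S.Finite ∧ MulAction.Supports (FinPerm A) S x}

/-- A set `S` of atoms supports a function `f` if `f (π • x) = π • f x` for every
finitary permutation `π` fixing `S` pointwise. -/
def SuppFun (A : Type*) {X Y : Type*} [SMul (FinPerm A) X] [SMul (FinPerm A) Y]
    (S : Set A) (f : X → Y) : Prop :=
  ∀ π : FinPerm A, (∀ a ∈ S, π • a = a) → ∀ x, f (π • x) = π • f x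

/-- A set `S` of atoms supports a function `f` between the subsets `X` and `Y` if, for
every finitary permutation `π` fixing `S` pointwise and every `x ∈ X`, we have
`π • x ∈ X`, `π • f x ∈ Y` and `f (π • x) = π • f x`. -/
def SuppFunOn (A : Type*) {U V : Type*} [SMul (FinPerm A) U] [SMul (FinPerm A) V]
    (S : Set A) (X : Set U) (Y : Set V) (f : U → V) : Prop :=
  ∀ π : FinPerm A, (∀ a ∈ S, π • a = a) →
    ∀ x ∈ X, π • x ∈ X ∧ π • f x ∈ Y ∧ f (π • x) = π • f x

/-- `℘_fs(X)`: the finitely supported subsets of the set `X`. -/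
def Pfs (A : Type*) {U : Type*} [SMul (FinPerm A) U] (X : Set U) : Set (Set U) :=
  {Z : Set U | Z ⊆ X ∧ FinSupp A Z}


/-- finitely supported Cantor theorem: for a finitely supported subset `X`
of an invariant set, the map `x ↦ {x}` is a finitely supported injection from `X` into
`℘_fs(X)`, but there is no finitely supported surjection from `X` onto `℘_fs(X)`; hence
`|X|` is strictly smaller than `|℘_fs(X)|` both with respect to finitely supported
injections and with respect to finitely supported surjections (in particular there is no
finitely supported bijection between `X` and `℘_fs(X)`). -/
theorem fsm_cantor {A U : Type*} [Infinite A] [MulAction (FinPerm A) U]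
    (hU : ∀ u : U, FinSupp A u) (X : Set U) (hX : FinSupp A X) :
    ((∀ x ∈ X, ({x} : Set U) ∈ Pfs A X) ∧
      Set.InjOn (fun x : U => ({x} : Set U)) X ∧
      (∃ S : Finset A, SuppFunOn A (S : Set A) X (Pfs A X) (fun x : U => ({x} : Set U)))) ∧
    (¬ ∃ (F : U → Set U) (S : Finset A),
      (∀ x ∈ X, F x ∈ Pfs A X) ∧ (∀ Z ∈ Pfs A X, ∃ x ∈ X, F x = Z) ∧
      SuppFunOn A (S : Set A) X (Pfs A X) F) ∧
    (¬ ∃ (F : U → Set U) (S : Finset A),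
      (∀ x ∈ X, F x ∈ Pfs A X) ∧ Set.InjOn F X ∧ (∀ Z ∈ Pfs A X, ∃ x ∈ X, F x = Z) ∧
      SuppFunOn A (S : Set A) X (Pfs A X) F) := by

  classical
  obtain ⟨SX, hSX⟩ := hX
  have hsing : ∀ x ∈ X, ({x} : Set U) ∈ Pfs A X := by
    intro x hx
    refine ⟨Set.singleton_subset_iff.mpr hx, ?_⟩
    obtain ⟨T, hT⟩ := hU x
    exact ⟨T, fun π hπ => by rw [Set.smul_set_singleton, hT π hπ]⟩
  have nosurj : ¬ ∃ (F : U → Set U) (S : Finset A),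
      (∀ x ∈ X, F x ∈ Pfs A X) ∧ (∀ Z ∈ Pfs A X, ∃ x ∈ X, F x = Z) ∧
      SuppFunOn A (S : Set A) X (Pfs A X) F := by
    rintro ⟨F, S, hmem, hsurj, hsupp⟩
    set D := {x | x ∈ X ∧ x ∉ F x} with hD
    have key : ∀ σ : FinPerm A, (∀ a ∈ (S : Set A), σ • a = a) → σ • D ⊆ D := by
      intro σ hσ y hy
      obtain ⟨x, hxD, rfl⟩ := hy
      obtain ⟨hx1, _, hx3⟩ := hsupp σ hσ x hxD.1
      refine ⟨hx1, fun h => ?_⟩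
      rw [hx3] at h
      exact hxD.2 (Set.smul_mem_smul_set_iff.mp h)
    have hDfs : D ∈ Pfs A X := by
      refine ⟨fun x hx => hx.1, S, fun π hπ => ?_⟩
      have hπinv : ∀ a ∈ (S : Set A), π⁻¹ • a = a := fun a ha => by
        conv_lhs => rw [← hπ ha]
        simp
      refine Set.Subset.antisymm (key π hπ) (fun x hx => ?_)
      have h1 : π⁻¹ • x ∈ D := key π⁻¹ hπinv (Set.smul_mem_smul_set hx)
      exact ⟨π⁻¹ • x, h1, by simp⟩
    obtain ⟨x, hxX, hFx⟩ := hsurj D hDfs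
    by_cases h : x ∈ F x
    · have hxD : x ∈ D := by rw [← hFx]; exact h
      exact hxD.2 h
    · have hxD : x ∈ D := ⟨hxX, h⟩
      rw [← hFx] at hxD
      exact h hxD
  refine ⟨⟨hsing, fun x _ y _ h => by simpa using h, ⟨SX, fun π hπ x hx => ?_⟩⟩,
    nosurj, fun ⟨F, S, h1, _, h3, h4⟩ => nosurj ⟨F, S, h1, h3, h4⟩⟩
  have hXfix : π • X = X := hSX π hπ
  have hπx : π • x ∈ X := by rw [← hXfix]; exact Set.smul_mem_smul_set hx
  exact ⟨hπx, by rw [Set.smul_set_singleton]; exact hsing _ hπx, by rw [Set.smul_set_singleton]⟩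
end

section
/- Let X and Y be finitely supported subsets of an invariant set under finitary permutations of A, with X nonempty. Then: (i) if there exists a finitely supported injection f : X → Y, then there exists a finitely supported surjection f' : Y → X; (ii) if there exists a finitely supported surjection f : Y → X, then the map x ↦ f⁻¹({x}) is a well-defined finitely supported injection from X into ℘_fs(Y). -/
open Pointwise

/-- let `X` and `Y` be finitely supported subsets of an invariant set, with
`X` nonempty. Then:
(i) if there is a finitely supported injection `f : X → Y`, then there is a finitely
    supported surjection `f' : Y → X`;
(ii) if there is a finitely supported surjection `f : Y → X`, then `x ↦ f⁻¹({x})` is a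
     well-defined finitely supported injection from `X` into `℘_fs(Y)`. -/
theorem fsm_inj_surj_transfer {A U : Type*} [Infinite A] [MulAction (FinPerm A) U]
    (hU : ∀ u : U, FinSupp A u)
    (X Y : Set U) (hX : FinSupp A X) (hY : FinSupp A Y) (hne : X.Nonempty) :
    ((∃ (f : U → U) (S : Finset A), (∀ x ∈ X, f x ∈ Y) ∧ Set.InjOn f X ∧
        SuppFunOn A (S : Set A) X Y f) →
      (∃ (f' : U → U) (S' : Finset A), (∀ y ∈ Y, f' y ∈ X) ∧ (∀ x ∈ X, ∃ y ∈ Y, f' y = x) ∧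
        SuppFunOn A (S' : Set A) Y X f')) ∧
    (∀ (f : U → U) (S : Finset A), (∀ y ∈ Y, f y ∈ X) → (∀ x ∈ X, ∃ y ∈ Y, f y = x) →
      SuppFunOn A (S : Set A) Y X f →
      (∀ x ∈ X, {y ∈ Y | f y = x} ∈ Pfs A Y) ∧
      Set.InjOn (fun x : U => {y ∈ Y | f y = x}) X ∧
      (∃ T : Finset A,
        SuppFunOn A (T : Set A) X (Pfs A Y) (fun x : U => {y ∈ Y | f y = x}))) := by
  classical
  obtain ⟨SX, hSX⟩ := hX
  obtain ⟨SY, hSY⟩ := hY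
  have hXinv : ∀ (σ : FinPerm A), (∀ a ∈ (SX : Set A), σ • a = a) → ∀ u ∈ X, σ • u ∈ X := by
    intro σ hσ u hu
    have h := hSX σ hσ
    rw [← h]
    exact Set.smul_mem_smul_set hu
  have hYinv : ∀ (σ : FinPerm A), (∀ a ∈ (SY : Set A), σ • a = a) → ∀ u ∈ Y, σ • u ∈ Y := by
    intro σ hσ u hu
    have h := hSY σ hσ
    rw [← h]
    exact Set.smul_mem_smul_set hu
  have fixinv : ∀ (σ : FinPerm A) (T : Set A), (∀ a ∈ T, σ • a = a) →
      (∀ a ∈ T, σ⁻¹ • a = a) := by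
    intro σ T hσ a ha
    exact inv_smul_eq_iff.mpr (hσ a ha).symm
  constructor
  · rintro ⟨f, S, hfXY, hfinj, hfsupp⟩
    obtain ⟨x₀, hx₀⟩ := hne
    obtain ⟨S₀, hS₀⟩ := hU x₀
    set f' : U → U := fun y => if h : ∃ x ∈ X, f x = y then h.choose else x₀ with hf'def
    have key : ∀ y, ∀ _ : (∃ x ∈ X, f x = y), f' y ∈ X ∧ f (f' y) = y := by
      intro y h
      simp only [hf'def, dif_pos h]
      exact ⟨h.choose_spec.1, h.choose_spec.2⟩
    have keyneg : ∀ y, ¬ (∃ x ∈ X, f x = y) → f' y = x₀ := by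
      intro y h
      simp only [hf'def, dif_neg h]
    refine ⟨f', S ∪ S₀ ∪ SX ∪ SY, ?_, ?_, ?_⟩
    · intro y _
      by_cases h : ∃ x ∈ X, f x = y
      · exact (key y h).1
      · rw [keyneg y h]; exact hx₀
    · intro x hx
      refine ⟨f x, hfXY x hx, ?_⟩
      have h : ∃ x' ∈ X, f x' = f x := ⟨x, hx, rfl⟩
      exact hfinj (key _ h).1 hx (key _ h).2
    · intro π hπ y hy
      have hπS : ∀ a ∈ (S : Set A), π • a = a := by
        intro a ha
        exact hπ a (by simp only [Finset.coe_union, Set.mem_union]; tauto)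
      have hπS₀ : ∀ a ∈ (S₀ : Set A), π • a = a := by
        intro a ha
        exact hπ a (by simp only [Finset.coe_union, Set.mem_union]; tauto)
      have hπSX : ∀ a ∈ (SX : Set A), π • a = a := by
        intro a ha
        exact hπ a (by simp only [Finset.coe_union, Set.mem_union]; tauto)
      have hπSY : ∀ a ∈ (SY : Set A), π • a = a := by
        intro a ha
        exact hπ a (by simp only [Finset.coe_union, Set.mem_union]; tauto)
      refine ⟨hYinv π hπSY y hy, ?_, ?_⟩ <;>
      · by_cases h : ∃ x ∈ X, f x = y
        · obtain ⟨hfy, hffy⟩ := key y h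
          obtain ⟨hπfy, _, heq⟩ := hfsupp π hπS (f' y) hfy
          have h' : ∃ x' ∈ X, f x' = π • y := ⟨π • f' y, hπfy, by rw [heq, hffy]⟩
          have hval : f' (π • y) = π • f' y :=
            hfinj (key _ h').1 hπfy (by rw [(key _ h').2, heq, hffy])
          first
          | exact hπfy
          | exact hval
        · have h' : ¬ ∃ x' ∈ X, f x' = π • y := by
            rintro ⟨x', hx', hfx'⟩
            refine h ⟨π⁻¹ • x', hXinv π⁻¹ (fixinv π _ hπSX) x' hx', ?_⟩
            have := (hfsupp π⁻¹ (fixinv π _ hπS) x' hx').2.2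
            rw [this, hfx', inv_smul_smul]
          have hx₀fix : π • x₀ = x₀ := hS₀ π hπS₀
          rw [keyneg y h]
          first
          | rw [hx₀fix]; exact hx₀
          | rw [keyneg _ h', hx₀fix]
  · intro f S hfYX hfsurj hfsupp
    have hg : ∀ (σ : FinPerm A), (∀ a ∈ (S : Set A), σ • a = a) →
        (∀ a ∈ (SY : Set A), σ • a = a) →
        ∀ x : U, σ • {y ∈ Y | f y = x} = {y ∈ Y | f y = σ • x} := by
      intro σ hσS hσSY x
      ext y
      rw [Set.mem_smul_set_iff_inv_smul_mem]
      simp only [Set.mem_setOf_eq]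
      constructor
      · rintro ⟨hy, hfy⟩
        have hyY : y ∈ Y := by
          have := hYinv σ hσSY _ hy
          rwa [smul_inv_smul] at this
        refine ⟨hyY, ?_⟩
        have h2 := (hfsupp σ⁻¹ (fixinv σ _ hσS) y hyY).2.2
        rw [← hfy, h2, smul_inv_smul]
      · rintro ⟨hy, hfy⟩
        have hyY : σ⁻¹ • y ∈ Y := hYinv σ⁻¹ (fixinv σ _ hσSY) y hy
        refine ⟨hyY, ?_⟩
        have := (hfsupp σ⁻¹ (fixinv σ _ hσS) y hy).2.2
        rw [this, hfy, inv_smul_smul]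
    have hga : ∀ x ∈ X, {y ∈ Y | f y = x} ∈ Pfs A Y := by
      intro x hx
      obtain ⟨Sx, hSx⟩ := hU x
      refine ⟨fun y hy => hy.1, S ∪ SY ∪ Sx, ?_⟩
      intro σ hσ
      have hσS : ∀ a ∈ (S : Set A), σ • a = a := by
        intro a ha
        exact hσ (by simp only [Finset.coe_union, Set.mem_union]; tauto)
      have hσSY : ∀ a ∈ (SY : Set A), σ • a = a := by
        intro a ha
        exact hσ (by simp only [Finset.coe_union, Set.mem_union]; tauto)
      have hσSx : ∀ a ∈ (Sx : Set A), σ • a = a := by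
        intro a ha
        exact hσ (by simp only [Finset.coe_union, Set.mem_union]; tauto)
      rw [hg σ hσS hσSY x, hSx σ hσSx]
    refine ⟨hga, ?_, ?_⟩
    · intro x₁ hx₁ x₂ hx₂ heq
      obtain ⟨y, hy, hfy⟩ := hfsurj x₁ hx₁
      have heq' : {y ∈ Y | f y = x₁} = {y ∈ Y | f y = x₂} := heq
      have : y ∈ {y ∈ Y | f y = x₂} := heq' ▸ (⟨hy, hfy⟩ : y ∈ {y ∈ Y | f y = x₁})
      rw [← hfy, this.2]
    · refine ⟨S ∪ SX ∪ SY, ?_⟩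
      intro π hπ x hx
      have hπS : ∀ a ∈ (S : Set A), π • a = a := by
        intro a ha
        exact hπ a (by simp only [Finset.coe_union, Set.mem_union]; tauto)
      have hπSX : ∀ a ∈ (SX : Set A), π • a = a := by
        intro a ha
        exact hπ a (by simp only [Finset.coe_union, Set.mem_union]; tauto)
      have hπSY : ∀ a ∈ (SY : Set A), π • a = a := by
        intro a ha
        exact hπ a (by simp only [Finset.coe_union, Set.mem_union]; tauto)
      have hxX : π • x ∈ X := hXinv π hπSX x hx
      have heq := hg π hπS hπSY x
      refine ⟨hxX, ?_, ?_⟩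
      · show π • {y ∈ Y | f y = x} ∈ Pfs A Y
        rw [heq]; exact hga _ hxX
      · show {y ∈ Y | f y = π • x} = π • {y ∈ Y | f y = x}
        exact heq.symm
end

section
/- Let X be a finitely supported subset of an invariant set under finitary permutations of A. The map sending a finitely supported subset Y ⊆ X to its characteristic function χ_Y : X → {0,1} (where {0,1} carries the trivial action) is a bijection from ℘_fs(X) onto the set of finitely supported functions from X to {0,1}, and this bijection is supported by supp(X). -/
open Pointwise

open Classical in
/-- The characteristic function of `Y`, valued in `Bool` (playing the role of `{0,1}`,
with `true` for `1` and `false` for `0`, carrying the trivial action). -/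
noncomputable def chi {U : Type*} (Y : Set U) : U → Bool :=
  fun x => if x ∈ Y then true else false

/-- The finitely supported functions from the subset `X` to `{0,1}` (with the trivial
action on `{0,1}`), represented as boolean functions that vanish off `X`: a finite set
`S` of atoms supports such a function `f` when, for every finitary permutation `π`
fixing `S` pointwise and every `x ∈ X`, `π • x ∈ X` and `f (π • x) = f x`. -/
def FsBoolFun (A : Type*) {U : Type*} [SMul (FinPerm A) U] (X : Set U) :
    Set (U → Bool) :=
  {f : U → Bool | (∀ x, x ∉ X → f x = false) ∧
    ∃ S : Finset A, ∀ π : FinPerm A, (∀ a ∈ (S : Set A), π • a = a) →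
      ∀ x ∈ X, π • x ∈ X ∧ f (π • x) = f x}

section Helpers

variable {A U : Type*}

lemma swap_mem_finPerm [DecidableEq A] (a b : A) : Equiv.swap a b ∈ FinPerm A := by
  refine Set.Finite.subset ((Set.finite_singleton b).insert a) ?_
  intro x hx
  simp only [Set.mem_setOf_eq] at hx
  by_contra h
  simp only [Set.mem_insert_iff, Set.mem_singleton_iff, not_or] at h
  exact hx (Equiv.swap_apply_of_ne_of_ne h.1 h.2)

variable [MulAction (FinPerm A) U]

lemma inv_fix {π : FinPerm A} {a : A} (h : π • a = a) : π⁻¹ • a = a := by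
  conv_lhs => rw [← h]
  exact inv_smul_smul π a

lemma supports_smul' {x : U} {S : Set A} (h : MulAction.Supports (FinPerm A) S x)
    (g : FinPerm A) : MulAction.Supports (FinPerm A) (g • S) (g • x) := by
  intro σ hσ
  have key : (g⁻¹ * σ * g) • x = x := by
    refine h _ ?_
    intro a ha
    have : σ • (g • a) = g • a := hσ (Set.smul_mem_smul_set ha)
    rw [mul_smul, mul_smul, this, inv_smul_smul]
  have := congrArg (g • ·) key
  simpa [mul_smul, smul_inv_smul] using this

lemma supports_erase [Infinite A] [DecidableEq A] {x : U} {S1 S2 : Finset A}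
    (h1 : MulAction.Supports (FinPerm A) (S1 : Set A) x)
    (h2 : MulAction.Supports (FinPerm A) (S2 : Set A) x)
    {a : A} (ha1 : a ∉ S1) :
    MulAction.Supports (FinPerm A) ((S2.erase a : Finset A) : Set A) x := by
  intro π hπ
  have hmoved : ({b : A | (π : Equiv.Perm A) b ≠ b} ∪ ↑(S1 ∪ S2 ∪ {a})).Finite :=
    Set.Finite.union π.2 (Finset.finite_toSet _)
  obtain ⟨d, hd⟩ := hmoved.infinite_compl.nonempty
  simp only [Set.mem_compl_iff, Set.mem_union, Set.mem_setOf_eq, Finset.mem_coe,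
    Finset.mem_union, Finset.mem_singleton] at hd
  push_neg at hd
  obtain ⟨hdπ, ⟨hdS1, hdS2⟩, hda⟩ := hd
  set τ : FinPerm A := ⟨Equiv.swap a d, swap_mem_finPerm a d⟩ with hτ
  have hτ_fix_S1 : ∀ b ∈ (S1 : Set A), τ • b = b := by
    intro b hb
    have hba : b ≠ a := fun h => ha1 (h ▸ hb)
    have hbd : b ≠ d := fun h => hdS1 (h ▸ hb)
    show Equiv.swap a d b = b
    exact Equiv.swap_apply_of_ne_of_ne hba hbd
  have hτx : τ • x = x := h1 τ hτ_fix_S1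
  have hσ : (τ * π * τ) • x = x := by
    refine h2 _ ?_
    intro b hb
    rw [mul_smul, mul_smul]
    by_cases hba : b = a
    · subst hba
      have h1' : τ • b = d := Equiv.swap_apply_left b d
      rw [h1']
      have h2' : π • d = d := hdπ
      rw [h2']
      show Equiv.swap b d d = b
      exact Equiv.swap_apply_right b d
    · have hbd : b ≠ d := fun h => hdS2 (h ▸ hb)
      have h1' : τ • b = b := Equiv.swap_apply_of_ne_of_ne hba hbd
      rw [h1']
      have h2' : π • b = b := hπ (by simp [Finset.mem_erase, hba, hb])
      rw [h2', h1']
  rw [mul_smul, mul_smul, hτx] at hσ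
  have := congrArg (τ⁻¹ • ·) hσ
  simp only [inv_smul_smul] at this
  rw [this]
  have : τ⁻¹ • x = τ⁻¹ • (τ • x) := by rw [hτx]
  rw [this, inv_smul_smul]

lemma supports_inter [Infinite A] [DecidableEq A] {x : U} (S1 S2 : Finset A)
    (h1 : MulAction.Supports (FinPerm A) (S1 : Set A) x)
    (h2 : MulAction.Supports (FinPerm A) (S2 : Set A) x) :
    MulAction.Supports (FinPerm A) ((S1 ∩ S2 : Finset A) : Set A) x := by
  by_cases h : (S2 \ S1).Nonempty
  · obtain ⟨a, ha⟩ := h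
    have ha' := Finset.mem_sdiff.mp ha
    have h2' := supports_erase h1 h2 ha'.2
    have : S1 ∩ S2.erase a = S1 ∩ S2 := by
      ext b
      simp only [Finset.mem_inter, Finset.mem_erase]
      constructor
      · rintro ⟨hb1, _, hb2⟩; exact ⟨hb1, hb2⟩
      · rintro ⟨hb1, hb2⟩; exact ⟨hb1, fun h => ha'.2 (h ▸ hb1), hb2⟩
    have := supports_inter S1 (S2.erase a) h1 h2'
    rwa [‹S1 ∩ S2.erase a = S1 ∩ S2›] at this
  · have hsub : S2 ⊆ S1 := by
      intro b hb
      by_contra hb1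
      exact h ⟨b, Finset.mem_sdiff.mpr ⟨hb, hb1⟩⟩
    have : S1 ∩ S2 = S2 := Finset.inter_eq_right.mpr hsub
    rw [this]
    exact h2
termination_by (S2 \ S1).card
decreasing_by
  refine Finset.card_lt_card ?_
  rw [Finset.ssubset_iff_of_subset]
  · exact ⟨a, ha, by simp [Finset.mem_sdiff]⟩
  · intro b hb
    rw [Finset.mem_sdiff] at hb ⊢
    exact ⟨Finset.mem_of_mem_erase hb.1, hb.2⟩

lemma supp_supports [Infinite A] {x : U} (hx : FinSupp A x) :
    MulAction.Supports (FinPerm A) (supp A x) x := by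
  classical
  have hex : ∃ n, ∃ S : Finset A, S.card = n ∧ MulAction.Supports (FinPerm A) (S : Set A) x := by
    obtain ⟨S, hS⟩ := hx
    exact ⟨S.card, S, rfl, hS⟩
  obtain ⟨S0, hS0card, hS0⟩ := Nat.find_spec hex
  have hmin : ∀ S : Finset A, MulAction.Supports (FinPerm A) (S : Set A) x →
      (S0 : Set A) ⊆ S := by
    intro S hS
    have hint := supports_inter S0 S hS0 hS
    have hcard : S0.card ≤ (S0 ∩ S).card := by
      have := Nat.find_min' hex ⟨S0 ∩ S, rfl, hint⟩
      omega
    have heq : S0 ∩ S = S0 := Finset.eq_of_subset_of_card_le Finset.inter_subset_left hcard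
    intro b hb
    have : b ∈ S0 ∩ S := heq.symm ▸ hb
    exact Finset.mem_inter.mp this |>.2
  have hsub : (S0 : Set A) ⊆ supp A x := by
    intro b hb
    rw [supp, Set.mem_sInter]
    rintro T ⟨hTfin, hTsupp⟩
    have : (S0 : Set A) ⊆ (hTfin.toFinset : Set A) := by
      refine hmin _ ?_
      rwa [Set.Finite.coe_toFinset]
    have := this hb
    rw [Finset.mem_coe, Set.Finite.mem_toFinset] at this
    exact this
  intro π hπ
  exact hS0 π fun a ha => hπ (hsub ha)

end Helpers

/-- for a finitely supported subset `X` of an invariant set, the map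
`Y ↦ χ_Y` is a bijection from `℘_fs(X)` onto the set of finitely supported functions
from `X` to `{0,1}`, and it is supported by `supp(X)` (where functions carry the action
`(π • f) x = f (π⁻¹ • x)`, since the action on `{0,1}` is trivial). -/
theorem fsm_powerset_equiv_boolFunctions {A U : Type*} [Infinite A]
    [MulAction (FinPerm A) U] (hU : ∀ u : U, FinSupp A u)
    (X : Set U) (hX : FinSupp A X) :
    (∀ Y ∈ Pfs A X, chi Y ∈ FsBoolFun A X) ∧
    Set.InjOn (fun Y : Set U => chi Y) (Pfs A X) ∧
    (∀ f ∈ FsBoolFun A X, ∃ Y ∈ Pfs A X, chi Y = f) ∧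
    (∀ π : FinPerm A, (∀ a ∈ supp A X, π • a = a) →
      ∀ Y ∈ Pfs A X, π • Y ∈ Pfs A X ∧ ∀ x : U, chi (π • Y) x = chi Y (π⁻¹ • x)) := by
  classical
  obtain ⟨SX, hSX⟩ := hX
  have hsuppX : MulAction.Supports (FinPerm A) (supp A X) X := supp_supports ⟨SX, hSX⟩
  refine ⟨?_, ?_, ?_, ?_⟩
  · -- χ_Y lands in FsBoolFun
    rintro Y ⟨hYX, SY, hSY⟩
    refine ⟨?_, SY ∪ SX, ?_⟩
    · intro x hx
      simp only [chi]
      rw [if_neg (fun h => hx (hYX h))]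
    · intro π hπ x hx
      have hfixY : ∀ ⦃a⦄, a ∈ (SY : Set A) → π • a = a := fun a ha =>
        hπ a (by simp [Finset.mem_coe.mp ha])
      have hfixX : ∀ ⦃a⦄, a ∈ (SX : Set A) → π • a = a := fun a ha =>
        hπ a (by simp [Finset.mem_coe.mp ha])
      have hπY : π • Y = Y := hSY π hfixY
      have hπX : π • X = X := hSX π hfixX
      refine ⟨by rw [← hπX]; exact Set.smul_mem_smul_set hx, ?_⟩
      have hmem : π • x ∈ Y ↔ x ∈ Y := by
        conv_lhs => rw [← hπY]
        exact Set.smul_mem_smul_set_iff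
      simp only [chi, hmem]
  · -- injectivity
    rintro Y hY Y' hY' h
    ext x
    have := congrFun h x
    simp only [chi] at this
    by_cases hx : x ∈ Y <;> by_cases hx' : x ∈ Y' <;> simp [hx, hx'] at this ⊢
  · -- surjectivity
    rintro f ⟨hf0, S, hS⟩
    set Y : Set U := {x | f x = true} with hYdef
    have hYX : Y ⊆ X := by
      intro x hx
      by_contra h
      rw [Set.mem_setOf_eq, hf0 x h] at hx
      exact Bool.false_ne_true hx
    have hstep : ∀ σ : FinPerm A, (∀ ⦃a⦄, a ∈ ((S ∪ SX : Finset A) : Set A) → σ • a = a) →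
        ∀ x ∈ Y, σ • x ∈ Y := by
      intro σ hσ x hx
      have hxX : x ∈ X := hYX hx
      have := hS σ (fun a ha => hσ (by simp [Finset.mem_coe.mp ha])) x hxX
      rw [Set.mem_setOf_eq] at hx ⊢
      rw [this.2, hx]
    refine ⟨Y, ⟨hYX, S ∪ SX, ?_⟩, ?_⟩
    · intro π hπ
      apply Set.eq_of_subset_of_subset
      · rintro _ ⟨x, hx, rfl⟩
        exact hstep π hπ x hx
      · intro x hx
        have hπinv : ∀ ⦃a⦄, a ∈ ((S ∪ SX : Finset A) : Set A) → π⁻¹ • a = a :=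
          fun a ha => inv_fix (hπ ha)
        have := hstep π⁻¹ hπinv x hx
        exact ⟨π⁻¹ • x, this, smul_inv_smul π x⟩
    · funext x
      simp only [chi, hYdef, Set.mem_setOf_eq]
      cases f x <;> simp
  · -- equivariance supported by supp A X
    intro π hπ Y hY
    obtain ⟨hYX, SY, hSY⟩ := hY
    have hπX : π • X = X := hsuppX π (fun a ha => hπ a ha)
    refine ⟨⟨?_, ?_⟩, ?_⟩
    · intro z hz
      rw [← hπX]
      exact Set.smul_set_mono hYX hz
    · refine ⟨SY.image (fun a => π • a), ?_⟩
      have hcoe : ((SY.image fun a => π • a : Finset A) : Set A) = π • (SY : Set A) := by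
        ext b
        simp [Set.mem_smul_set, eq_comm]
      rw [hcoe]
      exact supports_smul' hSY π
    · intro x
      have hmem : x ∈ π • Y ↔ π⁻¹ • x ∈ Y := Set.mem_smul_set_iff_inv_smul_mem
      simp only [chi, hmem]
end

section
/- Let X be a finitely supported subset of an invariant set under finitary permutations of A. The following are equivalent: (i) X is FSM Dedekind infinite, i.e., there exists a finitely supported injection from X onto a finitely supported proper subset of X; (ii) there exists a finitely supported injection f : ℕ → X, where ℕ carries the trivial action; equivalently, there exists an injective sequence (x_n)_{n ∈ ℕ} of elements of X all of whose terms are supported by one common finite set of atoms. -/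
open Pointwise

/-- for a finitely supported subset `X` of an invariant set the following
are equivalent:
(i) `X` is FSM Dedekind infinite, i.e. there is a finitely supported injection from `X`
    onto a finitely supported proper subset of `X`;
(ii) there is a finitely supported injection `f : ℕ → X` (ℕ carrying the trivial
     action); equivalently,
(iii) there is an injective sequence of elements of `X` all of whose terms are supported
      by one common finite set of atoms. -/
theorem fsm_dedekind_infinite_iff_nat_injection {A U : Type*} [Infinite A]
    [MulAction (FinPerm A) U] (hU : ∀ u : U, FinSupp A u)
    (X : Set U) (hX : FinSupp A X) :
    ((∃ (f : U → U) (Z : Set U) (S : Finset A),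
        Z ⊆ X ∧ Z ≠ X ∧ FinSupp A Z ∧ Set.InjOn f X ∧ f '' X = Z ∧
        SuppFunOn A (S : Set A) X Z f) ↔
      (∃ f : ℕ → U, Function.Injective f ∧ (∀ n, f n ∈ X) ∧
        ∃ S : Finset A, ∀ π : FinPerm A, (∀ a ∈ (S : Set A), π • a = a) →
          ∀ n : ℕ, π • f n = f n)) ∧
    ((∃ f : ℕ → U, Function.Injective f ∧ (∀ n, f n ∈ X) ∧
        ∃ S : Finset A, ∀ π : FinPerm A, (∀ a ∈ (S : Set A), π • a = a) →
          ∀ n : ℕ, π • f n = f n) ↔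
      (∃ x : ℕ → U, Function.Injective x ∧ (∀ n, x n ∈ X) ∧
        ∃ S : Finset A, ∀ n : ℕ, MulAction.Supports (FinPerm A) (S : Set A) (x n))) := by
  constructor
  · constructor
    · -- (i) → (ii)
      rintro ⟨g, Z, S, hZX, hZne, _hZfs, hinj, himg, hsupp⟩
      obtain ⟨x₀, hx₀X, hx₀Z⟩ :=
        Set.exists_of_ssubset (Set.ssubset_iff_subset_ne.mpr ⟨hZX, hZne⟩)
      obtain ⟨S₀, hS₀⟩ := hU x₀
      classical
      have hmem : ∀ n, g^[n] x₀ ∈ X := by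
        intro n
        induction n with
        | zero => exact hx₀X
        | succ k ih =>
          rw [Function.iterate_succ_apply']
          exact hZX (himg ▸ ⟨_, ih, rfl⟩)
      have hmemZ : ∀ n, g^[n + 1] x₀ ∈ Z := by
        intro n
        rw [Function.iterate_succ_apply']
        exact himg ▸ ⟨_, hmem n, rfl⟩
      have hinj' : ∀ m n, g^[m] x₀ = g^[n] x₀ → m = n := by
        intro m
        induction m with
        | zero =>
          intro n h
          cases n with
          | zero => rfl
          | succ k =>
            simp only [Function.iterate_zero_apply] at h
            exact absurd (h ▸ hmemZ k) hx₀Z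
        | succ k ih =>
          intro n h
          cases n with
          | zero =>
            simp only [Function.iterate_zero_apply] at h
            exact absurd (h ▸ hmemZ k) hx₀Z
          | succ l =>
            rw [Function.iterate_succ_apply', Function.iterate_succ_apply'] at h
            exact congrArg Nat.succ (ih l (hinj (hmem k) (hmem l) h))
      have hseq : ∀ π : FinPerm A, (∀ a ∈ ((S ∪ S₀ : Finset A) : Set A), π • a = a) →
          ∀ n, π • g^[n] x₀ = g^[n] x₀ := by
        intro π hπ
        have fixS : ∀ a ∈ (S : Set A), π • a = a := fun a ha =>
          hπ a (by simp [Finset.coe_union, ha])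
        have fixS₀ : ∀ a ∈ (S₀ : Set A), π • a = a := fun a ha =>
          hπ a (by simp [Finset.coe_union, ha])
        intro n
        induction n with
        | zero => exact hS₀ π fixS₀
        | succ k ih =>
          rw [Function.iterate_succ_apply']
          have hc := (hsupp π fixS (g^[k] x₀) (hmem k)).2.2
          rw [← hc, ih]
      exact ⟨fun n => g^[n] x₀, fun m n h => hinj' m n h, hmem, S ∪ S₀, hseq⟩
    · -- (ii) → (i)
      rintro ⟨f, hfinj, hfX, S, hS⟩
      obtain ⟨T, hT⟩ := hX
      classical
      set g : U → U := fun u => if h : ∃ n, f n = u then f (h.choose + 1) else u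
        with hgdef
      have hgf : ∀ n, g (f n) = f (n + 1) := by
        intro n
        have h : ∃ m, f m = f n := ⟨n, rfl⟩
        have he : h.choose = n := hfinj h.choose_spec
        simp only [hgdef, dif_pos h, he]
      have hgnot : ∀ u, (∀ n, f n ≠ u) → g u = u := by
        intro u hu
        have h : ¬ ∃ n, f n = u := by push_neg; exact hu
        simp only [hgdef, dif_neg h]
      have himg : g '' X = X \ {f 0} := by
        ext v
        constructor
        · rintro ⟨u, huX, rfl⟩
          by_cases h : ∃ n, f n = u
          · obtain ⟨n, rfl⟩ := h
            rw [hgf]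
            exact ⟨hfX (n + 1), fun e => Nat.succ_ne_zero n (hfinj e)⟩
          · push_neg at h
            rw [hgnot u h]
            exact ⟨huX, fun e => h 0 e.symm⟩
        · rintro ⟨hvX, hv0⟩
          by_cases h : ∃ n, f n = v
          · obtain ⟨n, rfl⟩ := h
            cases n with
            | zero => exact absurd rfl hv0
            | succ m => exact ⟨f m, hfX m, hgf m⟩
          · push_neg at h
            exact ⟨v, hvX, hgnot v h⟩
      have hginj : Set.InjOn g X := by
        intro u _ v _ h
        by_cases hu : ∃ n, f n = u
        · obtain ⟨m, rfl⟩ := hu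
          by_cases hv : ∃ n, f n = v
          · obtain ⟨n, rfl⟩ := hv
            rw [hgf, hgf] at h
            exact congrArg f (Nat.succ_injective (hfinj h))
          · push_neg at hv
            rw [hgf, hgnot v hv] at h
            exact absurd h (hv (m + 1))
        · push_neg at hu
          by_cases hv : ∃ n, f n = v
          · obtain ⟨n, rfl⟩ := hv
            rw [hgnot u hu, hgf] at h
            exact absurd h.symm (hu (n + 1))
          · push_neg at hv
            rwa [hgnot u hu, hgnot v hv] at h
      have hfix : ∀ π : FinPerm A, (∀ a ∈ ((S ∪ T : Finset A) : Set A), π • a = a) →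
          (∀ a ∈ (S : Set A), π • a = a) ∧ (∀ a ∈ (T : Set A), π • a = a) := by
        intro π hπ
        exact ⟨fun a ha => hπ a (by simp [Finset.coe_union, ha]),
               fun a ha => hπ a (by simp [Finset.coe_union, ha])⟩
      have hZsupp : ∀ π : FinPerm A, (∀ a ∈ ((S ∪ T : Finset A) : Set A), π • a = a) →
          π • (X \ {f 0}) = X \ {f 0} := by
        intro π hπ
        obtain ⟨fixS, fixT⟩ := hfix π hπ
        rw [Set.smul_set_sdiff, hT π fixT, Set.smul_set_singleton, hS π fixS 0]
      refine ⟨g, X \ {f 0}, S ∪ T, Set.diff_subset, ?_, ⟨S ∪ T, hZsupp⟩, hginj, himg, ?_⟩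
      · intro e
        have h0 := hfX 0
        rw [← e] at h0
        exact h0.2 rfl
      · intro π hπ x hxX
        obtain ⟨fixS, fixT⟩ := hfix π hπ
        have hXfix : π • X = X := hT π fixT
        have hfn : ∀ n, π • f n = f n := hS π fixS
        refine ⟨?_, ?_, ?_⟩
        · rw [← hXfix]; exact Set.smul_mem_smul_set hxX
        · have hgx : g x ∈ X \ {f 0} := himg ▸ ⟨x, hxX, rfl⟩
          rw [← hZsupp π hπ]
          exact Set.smul_mem_smul_set hgx
        · by_cases h : ∃ n, f n = x
          · obtain ⟨n, rfl⟩ := h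
            rw [hfn n, hgf n, hfn (n + 1)]
          · push_neg at h
            have h' : ∀ n, f n ≠ π • x := by
              intro n e
              refine h n (MulAction.injective π ?_)
              show π • f n = π • x
              rw [hfn n]; exact e
            rw [hgnot _ h', hgnot _ h]
  · constructor
    · rintro ⟨f, hf, hfX, S, hS⟩
      exact ⟨f, hf, hfX, S, fun n π hπ => hS π hπ n⟩
    · rintro ⟨x, hx, hxX, S, hS⟩
      exact ⟨x, hx, hxX, S, fun π hπ n => hS n π hπ⟩
end

section
/- Let X be a finitely supported subset of an invariant set under finitary permutations of A, let Y ⊆ X be a finitely supported subset, and let ≤ be a total order on Y that is finitely supported (as a subset of the product with componentwise action). Then every element of Y is supported by supp(≤) ∪ supp(Y); in particular Y is uniformly supported. Consequently, if X contains no infinite uniformly supported subset, then X contains no infinite finitely supported totally ordered subset (X is not FSM Mostowski infinite). -/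
open Pointwise

/-- `R`, viewed as a set of pairs, is a total order relation on the subset `Y`. -/
def IsTotalOrderOn {W : Type*} (Y : Set W) (R : Set (W × W)) : Prop :=
  (∀ p ∈ R, p.1 ∈ Y ∧ p.2 ∈ Y) ∧
  (∀ y ∈ Y, (y, y) ∈ R) ∧
  (∀ x y : W, (x, y) ∈ R → (y, x) ∈ R → x = y) ∧
  (∀ x y z : W, (x, y) ∈ R → (y, z) ∈ R → (x, z) ∈ R) ∧
  (∀ x ∈ Y, ∀ y ∈ Y, (x, y) ∈ R ∨ (y, x) ∈ R)

-- AUX START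
namespace FinPermAux
open scoped Classical
variable {A : Type*}

lemma finPerm_smul_def (π : FinPerm A) (a : A) : π • a = (π : Equiv.Perm A) a := rfl

lemma mem_finPerm (π : FinPerm A) : {a : A | (π : Equiv.Perm A) a ≠ a}.Finite := π.2

noncomputable def fswap (a b : A) : FinPerm A :=
  ⟨Equiv.swap a b, by
    show {x : A | Equiv.swap a b x ≠ x}.Finite
    refine Set.Finite.subset ((Set.finite_singleton b).insert a) ?_
    intro x hx
    by_contra h
    simp only [Set.mem_insert_iff, Set.mem_singleton_iff, not_or] at h
    exact hx (Equiv.swap_apply_of_ne_of_ne h.1 h.2)⟩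

@[simp] lemma fswap_coe (a b : A) : ((fswap a b : FinPerm A) : Equiv.Perm A) = Equiv.swap a b := rfl

lemma fswap_mul_self (a b : A) : fswap a b * fswap a b = 1 := by
  apply Subtype.ext
  show Equiv.swap a b * Equiv.swap a b = 1
  exact Equiv.swap_mul_self a b

lemma finPerm_swap_induction (F : Set A) (P : FinPerm A → Prop)
    (h1 : P 1)
    (hswap : ∀ (a b : A), a ∉ F → b ∉ F → a ≠ b → ∀ π : FinPerm A, P π → P (fswap a b * π)) :
    ∀ π : FinPerm A, (∀ a ∈ F, (π : Equiv.Perm A) a = a) → P π := by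
  suffices key : ∀ (n : ℕ) (π : FinPerm A), (mem_finPerm π).toFinset.card ≤ n →
      (∀ a ∈ F, (π : Equiv.Perm A) a = a) → P π by
    intro π hπ
    exact key _ π le_rfl hπ
  intro n
  induction n with
  | zero =>
    intro π hcard _
    have hemp : ∀ a : A, (π : Equiv.Perm A) a = a := by
      intro a
      by_contra h
      have ha : a ∈ (mem_finPerm π).toFinset := by
        rw [Set.Finite.mem_toFinset]; exact h
      have := Finset.card_pos.mpr ⟨a, ha⟩
      omega
    have : π = 1 := Subtype.ext (Equiv.ext hemp)
    rwa [this]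
  | succ n ih =>
    intro π hcard hF
    by_cases hemp : ∀ a : A, (π : Equiv.Perm A) a = a
    · have : π = 1 := Subtype.ext (Equiv.ext hemp)
      rwa [this]
    push_neg at hemp
    obtain ⟨a, ha⟩ := hemp
    set b := (π : Equiv.Perm A) a with hb
    have hab : a ≠ b := fun h => ha h.symm
    have haF : a ∉ F := fun h => ha (hF a h)
    have hbF : b ∉ F := by
      intro h
      have hbb : (π : Equiv.Perm A) b = b := hF b h
      exact hab ((π : Equiv.Perm A).injective (by rw [hbb, ← hb]))
    set σ : FinPerm A := fswap a b * π with hσ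
    have hσapp : ∀ x, (σ : Equiv.Perm A) x = Equiv.swap a b ((π : Equiv.Perm A) x) := by
      intro x; rfl
    have hmoved : (mem_finPerm σ).toFinset ⊆ (mem_finPerm π).toFinset.erase a := by
      intro x hx
      simp only [Set.Finite.mem_toFinset, Set.mem_setOf_eq] at hx
      rw [Finset.mem_erase]
      constructor
      · intro h; subst h
        apply hx
        rw [hσapp, ← hb, Equiv.swap_apply_right]
      · simp only [Set.Finite.mem_toFinset, Set.mem_setOf_eq]
        intro h
        apply hx
        rw [hσapp, h]
        have hxb : x ≠ b := by
          intro h'; subst h'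
          exact hab ((π : Equiv.Perm A).injective (by rw [h, ← hb]))
        have hxa : x ≠ a := by
          intro h'; subst h'; exact ha h
        exact Equiv.swap_apply_of_ne_of_ne hxa hxb
    have hamem : a ∈ (mem_finPerm π).toFinset := by
      rw [Set.Finite.mem_toFinset]; exact ha
    have hcard' : (mem_finPerm σ).toFinset.card ≤ n := by
      have h1' := Finset.card_le_card hmoved
      have h2' := Finset.card_erase_of_mem hamem
      omega
    have hσF : ∀ x ∈ F, (σ : Equiv.Perm A) x = x := by
      intro x hx
      rw [hσapp, hF x hx]
      exact Equiv.swap_apply_of_ne_of_ne (by rintro rfl; exact haF hx) (by rintro rfl; exact hbF hx)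
    have hPσ := ih σ hcard' hσF
    have := hswap a b haF hbF hab σ hPσ
    have heq : fswap a b * σ = π := by
      rw [hσ, ← mul_assoc, fswap_mul_self, one_mul]
    rwa [heq] at this

lemma supports_of_fix {X : Type*} [SMul (FinPerm A) X] {x : X} {S : Set A}
    (h : MulAction.Supports (FinPerm A) S x) {a b : A} (ha : a ∉ S) (hb : b ∉ S) :
    fswap a b • x = x := by
  apply h
  intro c hc
  rw [finPerm_smul_def, fswap_coe]
  exact Equiv.swap_apply_of_ne_of_ne (by rintro rfl; exact ha hc) (by rintro rfl; exact hb hc)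

lemma supports_inter [Infinite A] {X : Type*} [MulAction (FinPerm A) X] {x : X}
    {S1 S2 : Set A} (h1f : S1.Finite) (h2f : S2.Finite)
    (h1 : MulAction.Supports (FinPerm A) S1 x) (h2 : MulAction.Supports (FinPerm A) S2 x) :
    MulAction.Supports (FinPerm A) (S1 ∩ S2) x := by
  intro π hπ
  have hπ' : ∀ a ∈ S1 ∩ S2, (π : Equiv.Perm A) a = a := fun a ha => hπ ha
  refine finPerm_swap_induction (S1 ∩ S2) (fun π => π • x = x) (one_smul _ x) ?_ π hπ'
  intro a b ha hb hab σ hσ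
  obtain ⟨c, hc⟩ := (((h1f.union h2f).union ((Set.finite_singleton b).insert a)).infinite_compl).nonempty
  rw [Set.mem_compl_iff] at hc
  have hc1 : c ∉ S1 := fun h => hc (Or.inl (Or.inl h))
  have hc2 : c ∉ S2 := fun h => hc (Or.inl (Or.inr h))
  have hca : c ≠ a := fun h => hc (Or.inr (Or.inl h))
  have hcb : c ≠ b := fun h => hc (Or.inr (Or.inr h))
  have hswap : fswap a b • x = x := by
    rcases (by tauto : (a ∉ S1 ∨ a ∉ S2)) with ha1 | ha2 <;>
      rcases (by tauto : (b ∉ S1 ∨ b ∉ S2)) with hb1 | hb2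
    · exact supports_of_fix h1 ha1 hb1
    · -- a ∉ S1, b ∉ S2 : conjugation trick
      have key : fswap a b = fswap a c * fswap c b * fswap a c := by
        apply Subtype.ext
        show Equiv.swap a b = Equiv.swap a c * Equiv.swap c b * Equiv.swap a c
        have h := Equiv.swap_apply_apply (Equiv.swap a c) c b
        rw [Equiv.swap_apply_right,
          Equiv.swap_apply_of_ne_of_ne hab.symm (Ne.symm hcb), Equiv.swap_inv] at h
        exact h
      rw [key, mul_smul, mul_smul, supports_of_fix h1 ha1 hc1,
        supports_of_fix h2 hc2 hb2, supports_of_fix h1 ha1 hc1]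
    · -- a ∉ S2, b ∉ S1
      have key : fswap a b = fswap b c * fswap c a * fswap b c := by
        apply Subtype.ext
        show Equiv.swap a b = Equiv.swap b c * Equiv.swap c a * Equiv.swap b c
        have h := Equiv.swap_apply_apply (Equiv.swap b c) c a
        rw [Equiv.swap_apply_right,
          Equiv.swap_apply_of_ne_of_ne hab (Ne.symm hca), Equiv.swap_inv] at h
        rw [Equiv.swap_comm]
        exact h
      rw [key, mul_smul, mul_smul, supports_of_fix h1 hb1 hc1,
        supports_of_fix h2 hc2 ha2, supports_of_fix h1 hb1 hc1]
    · exact supports_of_fix h2 ha2 hb2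
  rw [mul_smul, hσ, hswap]

end FinPermAux

namespace FinPermAux

lemma supp_spec [Infinite A] {X : Type*} [MulAction (FinPerm A) X] {x : X}
    (hx : FinSupp A x) :
    (supp A x).Finite ∧ MulAction.Supports (FinPerm A) (supp A x) x := by
  classical
  obtain ⟨S0, hS0⟩ := hx
  set C : Finset (Finset A) :=
    S0.powerset.filter (fun T => MulAction.Supports (FinPerm A) (T : Set A) x) with hC
  have hS0C : S0 ∈ C := by
    rw [hC, Finset.mem_filter, Finset.mem_powerset]
    exact ⟨le_rfl, hS0⟩
  obtain ⟨T, hTC, hTmin⟩ := Finset.exists_min_image C Finset.card ⟨S0, hS0C⟩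
  rw [hC, Finset.mem_filter, Finset.mem_powerset] at hTC
  obtain ⟨hTS0, hTsupp⟩ := hTC
  have hTsub : ∀ S : Set A, S.Finite → MulAction.Supports (FinPerm A) S x → (T : Set A) ⊆ S := by
    intro S hSf hSs
    have hint := supports_inter T.finite_toSet hSf hTsupp hSs
    set T' : Finset A := T.filter (· ∈ S) with hT'
    have hcoe : (T' : Set A) = (T : Set A) ∩ S := by
      ext a
      simp [hT', Finset.mem_filter]
    have hT'supp : MulAction.Supports (FinPerm A) (T' : Set A) x := by
      rw [hcoe]; exact hint
    have hT'C : T' ∈ C := by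
      rw [hC, Finset.mem_filter, Finset.mem_powerset]
      exact ⟨le_trans (Finset.filter_subset _ _) hTS0, hT'supp⟩
    have hcard := hTmin T' hT'C
    have heq : T' = T := Finset.eq_of_subset_of_card_le (Finset.filter_subset _ _) hcard
    intro a haT
    have : a ∈ T' := heq ▸ haT
    rw [hT', Finset.mem_filter] at this
    exact this.2
  have hsupp_eq : supp A x = (T : Set A) := by
    apply subset_antisymm
    · exact Set.sInter_subset_of_mem ⟨T.finite_toSet, hTsupp⟩
    · exact Set.subset_sInter (fun S hS => hTsub S hS.1 hS.2)
  rw [hsupp_eq]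
  exact ⟨T.finite_toSet, hTsupp⟩

end FinPermAux

open FinPermAux

/-- let `X` be a finitely supported subset of an invariant set, `Y ⊆ X` a
finitely supported subset and `≤` (represented by the set `R` of pairs, with the
componentwise action) a finitely supported total order on `Y`. Then every element of `Y`
is supported by `supp(≤) ∪ supp(Y)`; in particular `Y` is uniformly supported.
Consequently, if `X` contains no infinite uniformly supported subset then `X` contains
no infinite finitely supported totally ordered subset (it is not FSM Mostowski
infinite). -/
theorem finSupp_total_order_uniformly_supported {A U : Type*} [Infinite A]
    [MulAction (FinPerm A) U] (hU : ∀ u : U, FinSupp A u)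
    (X : Set U) (hX : FinSupp A X) :
    (∀ (Y : Set U) (R : Set (U × U)), Y ⊆ X → FinSupp A Y → FinSupp A R →
      IsTotalOrderOn Y R →
      (∀ y ∈ Y, MulAction.Supports (FinPerm A) (supp A R ∪ supp A Y) y) ∧
      (∃ S : Finset A, ∀ y ∈ Y, MulAction.Supports (FinPerm A) (S : Set A) y)) ∧
    ((¬ ∃ Z : Set U, Z ⊆ X ∧ Z.Infinite ∧
        ∃ S : Finset A, ∀ z ∈ Z, MulAction.Supports (FinPerm A) (S : Set A) z) →
      ¬ ∃ (Y : Set U) (R : Set (U × U)), Y ⊆ X ∧ Y.Infinite ∧ FinSupp A Y ∧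
        FinSupp A R ∧ IsTotalOrderOn Y R) := by
  have main : ∀ (Y : Set U) (R : Set (U × U)), Y ⊆ X → FinSupp A Y → FinSupp A R →
      IsTotalOrderOn Y R →
      (∀ y ∈ Y, MulAction.Supports (FinPerm A) (supp A R ∪ supp A Y) y) ∧
      (∃ S : Finset A, ∀ y ∈ Y, MulAction.Supports (FinPerm A) (S : Set A) y) := by
    intro Y R _hYX hY hR hTO
    obtain ⟨hRfin, hRsupp⟩ := supp_spec hR
    obtain ⟨hYfin, hYsupp⟩ := supp_spec hY
    obtain ⟨_hdom, _hrefl, hantisym, _htrans, htotal⟩ := hTO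
    have hmain : ∀ y ∈ Y, MulAction.Supports (FinPerm A) (supp A R ∪ supp A Y) y := by
      intro y hy π hπ
      have hπ' : ∀ a ∈ supp A R ∪ supp A Y, (π : Equiv.Perm A) a = a := fun a ha => hπ ha
      refine finPerm_swap_induction (supp A R ∪ supp A Y) (fun π => π • y = y)
        (one_smul _ y) ?_ π hπ'
      intro a b ha hb _hab σ hσ
      have haR : a ∉ supp A R := fun h => ha (Or.inl h)
      have haY : a ∉ supp A Y := fun h => ha (Or.inr h)
      have hbR : b ∉ supp A R := fun h => hb (Or.inl h)
      have hbY : b ∉ supp A Y := fun h => hb (Or.inr h)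
      set τ : FinPerm A := fswap a b with hτ
      have hRfix : τ • R = R := supports_of_fix hRsupp haR hbR
      have hYfix : τ • Y = Y := supports_of_fix hYsupp haY hbY
      have hτy : τ • y ∈ Y := by
        rw [← hYfix]; exact Set.smul_mem_smul_set hy
      have hττ : τ • (τ • y) = y := by
        rw [← mul_smul, hτ, fswap_mul_self, one_smul]
      have hτfix : τ • y = y := by
        rcases htotal y hy (τ • y) hτy with hord | hord
        · have h2 : τ • ((y, τ • y) : U × U) ∈ τ • R := Set.smul_mem_smul_set hord
          rw [hRfix] at h2
          have h3 : τ • ((y, τ • y) : U × U) = (τ • y, y) := by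
            rw [Prod.smul_mk, hττ]
          rw [h3] at h2
          exact (hantisym y (τ • y) hord h2).symm
        · have h2 : τ • ((τ • y, y) : U × U) ∈ τ • R := Set.smul_mem_smul_set hord
          rw [hRfix] at h2
          have h3 : τ • ((τ • y, y) : U × U) = (y, τ • y) := by
            rw [Prod.smul_mk, hττ]
          rw [h3] at h2
          exact (hantisym (τ • y) y hord h2)
      rw [mul_smul, hσ, hτfix]
    refine ⟨hmain, ⟨(hRfin.union hYfin).toFinset, ?_⟩⟩
    intro y hy
    have : ((hRfin.union hYfin).toFinset : Set A) = supp A R ∪ supp A Y :=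
      Set.Finite.coe_toFinset _
    rw [this]
    exact hmain y hy
  refine ⟨main, ?_⟩
  rintro hno ⟨Y, R, hYX, hYinf, hY, hR, hTO⟩
  obtain ⟨S, hS⟩ := (main Y R hYX hY hR hTO).2
  exact hno ⟨Y, hYX, hYinf, S, hS⟩
end
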